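/- Let Z be a metrizable space and {A_ξ : ξ < ω₁} an increasing (under inclusion) family of subsets covering Z such that every compact K ⊆ Z is contained in some A_α. If A_ξ ≠ Z for all ξ < ω₁, then Z is not productively Lindelöf. -/

import Mathlib

open Set TopologicalSpace
open Topology

/-- `U` is an open covering of `X`. -/
def IsOpenCover {X : Type*} [TopologicalSpace X] (U : Set (Set X)) : Prop :=
  (∀ A ∈ U, IsOpen A) ∧ ⋃₀ U = Set.univ

/-- `𝒴` is a Lindelöf collection of open coverings: for every choice of a finite
subfamily of each member, countably many of these finite families are cofinal. -/
def IsLindelofCollection {X : Type*} [TopologicalSpace X] (𝒴 : Set (Set (Set X))) : Prop :=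
  ∀ f : Set (Set X) → Finset (Set X), (∀ U ∈ 𝒴, ↑(f U) ⊆ U) →
    ∃ g : ℕ → Set (Set X), (∀ n, g n ∈ 𝒴) ∧ ∀ U ∈ 𝒴, ∃ n, ↑(f (g n)) ⊆ U

/-- The pL property. -/
def HasPL (X : Type*) [TopologicalSpace X] : Prop :=
  ∀ 𝒴 : Set (Set (Set X)), (∀ U ∈ 𝒴, IsOpenCover U) → IsLindelofCollection 𝒴 →
    ∃ A : ℕ → Set X, (∀ n, IsOpen (A n)) ∧
      ∀ x : X, ∀ U ∈ 𝒴, ∃ n, x ∈ A n ∧ A n ∈ U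

/-- `X` is productively Lindelöf. -/
def ProductivelyLindelof (X : Type u) [TopologicalSpace X] : Prop :=
  ∀ (Y : Type u) (_ : TopologicalSpace Y), LindelofSpace Y → LindelofSpace (X × Y)

/-- `W` is a covering of `X × Y` by open boxes. -/
def IsBoxCover {X Y : Type*} [TopologicalSpace X] [TopologicalSpace Y]
    (W : Set (Set X × Set Y)) : Prop :=
  (∀ w ∈ W, IsOpen w.1 ∧ IsOpen w.2) ∧ ∀ p : X × Y, ∃ w ∈ W, p.1 ∈ w.1 ∧ p.2 ∈ w.2

/-- `W` is ω-injective: each first factor occurs with only countably many second factors. -/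
def IsOmegaInjective {X Y : Type*} (W : Set (Set X × Set Y)) : Prop :=
  ∀ A : Set X, {B : Set Y | (A, B) ∈ W}.Countable

/-- `W` is injective: equal first factors imply equal second factors. -/
def IsInjectiveCover {X Y : Type*} (W : Set (Set X × Set Y)) : Prop :=
  ∀ w ∈ W, ∀ w' ∈ W, w.1 = w'.1 → w.2 = w'.2

/-- The box family `W` refines the covering `W0` of `X × Y`. -/
def BoxRefines {X Y : Type*} (W : Set (Set X × Set Y)) (W0 : Set (Set (X × Y))) : Prop :=
  ∀ w ∈ W, ∃ V ∈ W0, w.1 ×ˢ w.2 ⊆ V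

/-- The ordinal `ω₁` as a (linearly ordered) type. -/
noncomputable abbrev Omega1 : Type := (Cardinal.aleph 1).ord.ToType

namespace Stmt13Aux

lemma omega1_nonempty : Nonempty Omega1 := by
  rw [Ordinal.nonempty_toType_iff, ne_eq, Cardinal.ord_eq_zero]
  exact (Cardinal.aleph_pos 1).ne'

lemma iio_countable (β : Omega1) : (Set.Iio β).Countable :=
  (Cardinal.countable_iff_lt_aleph_one _).2 (Cardinal.mk_Iio_toType_ord_lt β)

lemma bound_of_countable (s : Set Omega1) (hs : s.Countable) : ∃ β : Omega1, ∀ ξ ∈ s, ξ ≤ β := by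
  classical
  haveI := hs.to_subtype
  set o := (Cardinal.aleph 1).ord with ho
  set iso := Ordinal.ToType.mk (o := o) with hiso
  have h2 : iSup (fun ξ : s => ((iso.symm ξ.1 : Set.Iio o) : Ordinal)) < o := by
    have := Ordinal.iSup_lt_omega_one (α := s)
      (f := fun ξ : s => ((iso.symm ξ.1 : Set.Iio o) : Ordinal)) (fun ξ => by
        rw [← Cardinal.ord_aleph]; exact (iso.symm ξ.1).2)
    rwa [← Cardinal.ord_aleph] at this
  refine ⟨iso ⟨_, h2⟩, fun ξ hξ => ?_⟩
  have h3 : ((iso.symm ξ : Set.Iio o) : Ordinal) ≤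
      iSup (fun ξ : s => ((iso.symm ξ.1 : Set.Iio o) : Ordinal)) :=
    Ordinal.le_iSup _ (⟨ξ, hξ⟩ : s)
  calc ξ = iso (iso.symm ξ) := (iso.apply_symm_apply ξ).symm
    _ ≤ iso ⟨_, h2⟩ := iso.le_iff_le.2 (Subtype.mk_le_mk.2 h3)

/-- Embedding of a separable metric space into the "cube" inside `ℕ → ℝ`. -/
lemma exists_embedding_cube (Z : Type) [MetricSpace Z] [Nonempty Z] [SeparableSpace Z] :
    ∃ e : Z → (ℕ → ℝ), IsEmbedding e ∧ ∀ z n, e z n ∈ Set.Icc (0:ℝ) 1 := by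
  classical
  set q : ℕ → Z := TopologicalSpace.denseSeq Z with hq
  have hqd : ∀ (z : Z), ∀ r > (0:ℝ), ∃ n, dist z (q n) < r :=
    fun z r hr => Metric.denseRange_iff.1 (TopologicalSpace.denseRange_denseSeq Z) z r hr
  set e : Z → (ℕ → ℝ) := fun z n => min (dist z (q n)) 1 with he
  have hcont : Continuous e :=
    continuous_pi fun n => ((continuous_id.dist continuous_const)).min continuous_const
  have hinj : Function.Injective e := by
    intro z w h
    by_contra hne
    have hd : 0 < dist z w := dist_pos.2 hne
    set δ := min (dist z w) 1 with hδ
    have hδ0 : 0 < δ := lt_min hd one_pos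
    have hδ1 : δ ≤ 1 := min_le_right _ _
    obtain ⟨n, hn⟩ := hqd z (δ/4) (by linarith)
    have h1 : e z n = dist z (q n) := min_eq_left (by linarith)
    have h2 : dist w (q n) ≥ 3*δ/4 := by
      have h3 : δ ≤ dist z w := min_le_left _ _
      have h5 := dist_triangle z (q n) w
      have h4 : dist (q n) w = dist w (q n) := dist_comm _ _
      linarith
    have h5 : e w n ≥ 3*δ/4 := le_min h2 (by linarith)
    have h6 : e z n = e w n := congrFun h n
    rw [h1] at h6
    linarith
  refine ⟨e, ⟨Topology.isInducing_iff_nhds.2 fun z => le_antisymm ?_ ?_, hinj⟩,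
    fun z n => ⟨le_min dist_nonneg zero_le_one, min_le_right _ _⟩⟩
  · exact (hcont.tendsto z).le_comap
  · refine (Metric.nhds_basis_ball (x := z)).ge_iff.2 fun ε hε => ?_
    set ε' := min ε 1 with hε'
    have hε'0 : 0 < ε' := lt_min hε one_pos
    have hε'1 : ε' ≤ 1 := min_le_right _ _
    obtain ⟨n, hn⟩ := hqd z (ε'/4) (by linarith)
    refine Filter.mem_comap.2 ⟨(fun v : ℕ → ℝ => v n) ⁻¹' Metric.ball (e z n) (ε'/4), ?_, ?_⟩
    · exact (continuous_apply n).continuousAt.preimage_mem_nhds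
        (Metric.ball_mem_nhds _ (by linarith))
    · intro w hw
      simp only [mem_preimage, Metric.mem_ball, Real.dist_eq] at hw
      have h1 : e z n = dist z (q n) := min_eq_left (by linarith)
      have h2 : e w n < ε'/2 := by
        have habs := (abs_lt.1 hw).2
        rw [h1] at habs
        have : e w n = min (dist w (q n)) 1 := rfl
        linarith
      have h3 : dist w (q n) < ε'/2 := by
        have hm : min (dist w (q n)) 1 < ε'/2 := h2
        rcases min_cases (dist w (q n)) 1 with ⟨h,_⟩|⟨h,hc⟩
        · rwa [h] at hm
        · rw [h] at hm; linarith
      have h7 : dist w z < ε' := by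
        have h8 := dist_triangle w (q n) z
        have h4 : dist (q n) z = dist z (q n) := dist_comm _ _
        linarith
      exact Metric.mem_ball.2 (lt_of_lt_of_le (by rwa [dist_comm] at h7 ⊢) (min_le_left _ _))

end Stmt13Aux

theorem stmt13 {Z : Type} [TopologicalSpace Z] [TopologicalSpace.MetrizableSpace Z]
    (A : Omega1 → Set Z) (hmono : Monotone A) (hcover : ⋃ ξ, A ξ = Set.univ)
    (hcomp : ∀ K : Set Z, IsCompact K → ∃ α, K ⊆ A α)
    (hne : ∀ ξ, A ξ ≠ Set.univ) :
    ¬ ProductivelyLindelof Z := by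
  classical
  intro hPL
  haveI : Nonempty Omega1 := Stmt13Aux.omega1_nonempty
  -- choose escaping points
  have hx : ∀ ξ : Omega1, ∃ z : Z, z ∉ A ξ := by
    intro ξ
    rcases (Set.ne_univ_iff_exists_notMem _).1 (hne ξ) with ⟨z, hz⟩
    exact ⟨z, hz⟩
  choose x hxA using hx
  haveI : Nonempty Z := ⟨x (Classical.arbitrary Omega1)⟩
  -- rank function
  have hrk' : ∀ z : Z, ∃ ξ : Omega1, z ∈ A ξ := by
    intro z
    have : z ∈ ⋃ ξ, A ξ := by rw [hcover]; trivial
    exact mem_iUnion.1 this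
  choose rk hrk using hrk'
  have key : ∀ (β ξ : Omega1) (z : Z), z ∉ A β → z ∈ A ξ → β < ξ := by
    intro β ξ z hz hzξ
    by_contra h
    exact hz (hmono (not_lt.1 h) hzξ)
  -- Z is Lindelof
  haveI hZlin : LindelofSpace Z := by
    haveI h1 : LindelofSpace (Z × PUnit) := hPL PUnit inferInstance inferInstance
    refine ⟨?_⟩
    have h2 := (isLindelof_univ (X := Z × PUnit)).image (Homeomorph.prodPUnit Z).continuous
    rwa [Set.image_univ, (Homeomorph.prodPUnit Z).surjective.range_eq] at h2
  -- metric structure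
  letI mZ : MetricSpace Z := TopologicalSpace.metrizableSpaceMetric Z
  haveI hsc : SecondCountableTopology Z := by
    apply Metric.secondCountable_of_almost_dense_set
    intro ε hε
    obtain ⟨t, htc, htcov⟩ := isLindelof_univ.elim_countable_subcover
      (fun z : Z => Metric.ball z ε) (fun z => Metric.isOpen_ball)
      (fun z _ => mem_iUnion.2 ⟨z, Metric.mem_ball_self hε⟩)
    refine ⟨t, htc, fun w => ?_⟩
    obtain ⟨y, hy, hw⟩ := mem_iUnion₂.1 (htcov (mem_univ w))
    exact ⟨y, hy, (Metric.mem_ball.1 hw).le⟩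
  -- embedding into the cube
  obtain ⟨e, hEmb, hcube⟩ := Stmt13Aux.exists_embedding_cube Z
  set D : Set (ℕ → ℝ) := Set.range (fun β => e (x β)) with hD
  set Yset : Set (ℕ → ℝ) := D ∪ (closure D \ Set.range e) with hYset
  -- the Michael-style partner space
  letI tY : TopologicalSpace (↥Yset) :=
    { IsOpen := fun S => ∀ y ∈ S, (y : ℕ → ℝ) ∉ Set.range e →
        ∃ V : Set (ℕ → ℝ), IsOpen V ∧ (y : ℕ → ℝ) ∈ V ∧ {w : ↥Yset | (w : ℕ → ℝ) ∈ V} ⊆ S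
      isOpen_univ := fun y _ _ => ⟨Set.univ, isOpen_univ, trivial, Set.subset_univ _⟩
      isOpen_inter := fun S T hS hT y hy hr => by
        obtain ⟨V, hV, hyV, hVs⟩ := hS y hy.1 hr
        obtain ⟨W, hW, hyW, hWs⟩ := hT y hy.2 hr
        exact ⟨V ∩ W, hV.inter hW, ⟨hyV, hyW⟩, fun w hw => ⟨hVs hw.1, hWs hw.2⟩⟩
      isOpen_sUnion := fun 𝒮 h y hy hr => by
        obtain ⟨S, hS, hyS⟩ := hy
        obtain ⟨V, hV, hyV, hVs⟩ := h S hS y hyS hr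
        exact ⟨V, hV, hyV, hVs.trans (Set.subset_sUnion_of_mem hS)⟩ }
  have hsubOpen : ∀ V : Set (ℕ → ℝ), IsOpen V →
      IsOpen {w : ↥Yset | (w : ℕ → ℝ) ∈ V} :=
    fun V hV y hy hr => ⟨V, hV, hy, fun _ hw => hw⟩
  have hvalcont : Continuous (fun y : ↥Yset => (y : ℕ → ℝ)) := by
    rw [continuous_def]
    intro V hV
    exact hsubOpen V hV
  have hsing : ∀ y : ↥Yset, (y : ℕ → ℝ) ∈ Set.range e → IsOpen ({y} : Set ↥Yset) := by
    intro y hy z hz hr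
    exact absurd (show (z : ℕ → ℝ) ∈ Set.range e by
      rw [show z = y from hz]; exact hy) hr
  -- Y is Lindelof
  haveI hYlin : LindelofSpace (↥Yset) := by
    refine ⟨isLindelof_of_countable_subcover ?_⟩
    intro ι U hUo hcov
    set I2 : Set (ℕ → ℝ) := closure D \ Set.range e with hI2
    have hchoice : ∀ p : ↥I2, ∃ (i : ι) (V : Set (ℕ → ℝ)), IsOpen V ∧ (p : ℕ → ℝ) ∈ V ∧
        {w : ↥Yset | (w : ℕ → ℝ) ∈ V} ⊆ U i := by
      intro p
      have hpY : (p : ℕ → ℝ) ∈ Yset := Or.inr p.2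
      have hmem : (⟨(p : ℕ → ℝ), hpY⟩ : ↥Yset) ∈ ⋃ i, U i := hcov (mem_univ _)
      obtain ⟨i, hi⟩ := mem_iUnion.1 hmem
      obtain ⟨V, hV, hpV, hVU⟩ := hUo i _ hi p.2.2
      exact ⟨i, V, hV, hpV, hVU⟩
    choose ix V hVopen hVmem hVsub using hchoice
    have hI2lin : IsLindelof I2 := HereditarilyLindelof_LindelofSets I2
    have hI2cov : I2 ⊆ ⋃ p : ↥I2, V p := fun w hw => mem_iUnion.2 ⟨⟨w, hw⟩, hVmem _⟩
    obtain ⟨t, htc, htcov⟩ := hI2lin.elim_countable_subcover V hVopen hI2cov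
    set G : Set (ℕ → ℝ) := ⋃ p ∈ t, V p with hG
    have hGopen : IsOpen G := isOpen_biUnion fun p _ => hVopen p
    -- closure D is compact
    have hDcube : D ⊆ Set.pi univ (fun _ : ℕ => Set.Icc (0:ℝ) 1) := by
      rintro v ⟨β, rfl⟩ n _
      exact hcube (x β) n
    have hclD : IsCompact (closure D) :=
      (isCompact_univ_pi fun _ => isCompact_Icc).of_isClosed_subset isClosed_closure
        (closure_minimal hDcube (isClosed_set_pi fun n _ => isClosed_Icc))
    have hC : IsCompact (closure D \ G) := by
      rw [Set.diff_eq]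
      exact hclD.inter_right hGopen.isClosed_compl
    have hCr : closure D \ G ⊆ Set.range e := by
      intro v hv
      by_contra hvr
      exact hv.2 (htcov ⟨hv.1, hvr⟩)
    have hCz : IsCompact (e ⁻¹' (closure D \ G)) :=
      (hEmb.toIsInducing.isCompact_preimage_iff hCr).2 hC
    obtain ⟨γ, hγ⟩ := hcomp _ hCz
    have hleft : ∀ y : ↥Yset, (y : ℕ → ℝ) ∉ G → ∃ β, β < γ ∧ (y : ℕ → ℝ) = e (x β) := by
      intro y hyG
      have hyD : (y : ℕ → ℝ) ∈ D := by
        rcases y.2 with h | h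
        · exact h
        · exact absurd (htcov h) hyG
      obtain ⟨β, hβ⟩ := hyD
      have hβ' : e (x β) = (y : ℕ → ℝ) := hβ
      have hyC : (y : ℕ → ℝ) ∈ closure D \ G := ⟨subset_closure ⟨β, hβ⟩, hyG⟩
      have hmem : x β ∈ e ⁻¹' (closure D \ G) := by
        rw [Set.mem_preimage, hβ']
        exact hyC
      exact ⟨β, key β γ (x β) (hxA β) (hγ hmem), hβ'.symm⟩
    have hcovY : ∀ y : ↥Yset, ∃ i, y ∈ U i := fun y => mem_iUnion.1 (hcov (mem_univ y))
    choose jx hjx using hcovY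
    refine ⟨(fun p => ix p) '' t ∪
      (fun β : Omega1 => jx ⟨e (x β), Or.inl ⟨β, rfl⟩⟩) '' (Set.Iio γ),
      (htc.image _).union ((Stmt13Aux.iio_countable γ).image _), ?_⟩
    intro y _
    by_cases hyG : (y : ℕ → ℝ) ∈ G
    · obtain ⟨p, hp, hyp⟩ := mem_iUnion₂.1 hyG
      refine mem_iUnion₂.2 ⟨ix p, Or.inl ⟨p, hp, rfl⟩, hVsub p hyp⟩
    · obtain ⟨β, hβγ, hyval⟩ := hleft y hyG
      have hy' : y = ⟨e (x β), Or.inl ⟨β, rfl⟩⟩ := Subtype.ext hyval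
      rw [hy']
      exact mem_iUnion₂.2 ⟨_, Or.inr ⟨β, hβγ, rfl⟩, hjx _⟩
  -- now use productive Lindelofness
  haveI hZY : LindelofSpace (Z × ↥Yset) := hPL (↥Yset) tY hYlin
  -- the closed discrete diagonal
  set E : Set (Z × ↥Yset) := {p | e p.1 = (p.2 : ℕ → ℝ)} with hE
  have hEclosed : IsClosed E := by
    have hEeq : E = (fun p : Z × ↥Yset => (e p.1, (p.2 : ℕ → ℝ))) ⁻¹' (Set.diagonal (ℕ → ℝ)) := by
      ext p
      exact Iff.rfl
    rw [hEeq]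
    exact isClosed_diagonal.preimage
      ((hEmb.continuous.comp continuous_fst).prodMk (hvalcont.comp continuous_snd))
  set DY : Set (↥Yset) := {y | (y : ℕ → ℝ) ∈ D} with hDY
  set 𝒰 : Option ↥DY → Set (Z × ↥Yset) :=
    fun o => Option.elim o Eᶜ (fun d => Set.univ ×ˢ ({d.1} : Set ↥Yset)) with h𝒰
  have h𝒰o : ∀ i, IsOpen (𝒰 i) := by
    rintro (_ | d)
    · exact hEclosed.isOpen_compl
    · refine isOpen_univ.prod (hsing d.1 ?_)
      obtain ⟨β, hβ⟩ := d.2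
      exact ⟨x β, hβ⟩
  have h𝒰cov : (Set.univ : Set (Z × ↥Yset)) ⊆ ⋃ i, 𝒰 i := by
    rintro ⟨z, y⟩ -
    by_cases hzy : e z = (y : ℕ → ℝ)
    · have hyD : (y : ℕ → ℝ) ∈ D := by
        rcases y.2 with h | h
        · exact h
        · exact absurd ⟨z, hzy⟩ h.2
      exact mem_iUnion.2 ⟨some ⟨y, hyD⟩, ⟨trivial, rfl⟩⟩
    · exact mem_iUnion.2 ⟨none, hzy⟩
  obtain ⟨t, htc, htcov⟩ := (isLindelof_univ (X := Z × ↥Yset)).elim_countable_subcover 𝒰 h𝒰o h𝒰cov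
  -- extract countably many ranks
  have hSDc : {d : ↥DY | some d ∈ t}.Countable := htc.preimage (Option.some_injective _)
  have hdr : ∀ d : ↥DY, ∃ ξ : Omega1, ∀ β, e (x β) = ((d : ↥Yset) : ℕ → ℝ) → β < ξ := by
    intro d
    obtain ⟨β0, hβ0⟩ := d.2
    refine ⟨rk (x β0), fun β hβ => ?_⟩
    have hxx : x β = x β0 := hEmb.injective (hβ.trans hβ0.symm)
    exact key β _ (x β) (hxA β) (hxx ▸ hrk (x β0))
  choose rkd hrkd using hdr
  obtain ⟨βs, hβs⟩ := Stmt13Aux.bound_of_countable (rkd '' {d : ↥DY | some d ∈ t})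
    (hSDc.image _)
  -- the diagonal point at level βs is covered by some element of t
  have hP : ((x βs, ⟨e (x βs), Or.inl ⟨βs, rfl⟩⟩) : Z × ↥Yset) ∈ ⋃ i ∈ t, 𝒰 i :=
    htcov (mem_univ _)
  obtain ⟨i, hit, hPi⟩ := mem_iUnion₂.1 hP
  match i with
  | none => exact hPi rfl
  | some d =>
      have hval : e (x βs) = ((d : ↥Yset) : ℕ → ℝ) := by
        have h2 := hPi.2
        simp only [Set.mem_singleton_iff] at h2
        exact congrArg Subtype.val h2
      have h1 : βs < rkd d := hrkd d βs hval
      have h2 : rkd d ≤ βs := hβs _ ⟨d, hit, rfl⟩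
      exact absurd h1 (not_lt.2 h2)
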